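/- Fix γ > 0. If C is a cluster of size n in a CPM(γ)-optimal clustering of a graph, and E₀ is any edge cut of C splitting it into nonempty parts of sizes n' and n − n', then |E₀| ≥ γ·(n−1). In particular CPM(γ) satisfies Connectivity with f(n) chosen below γ(n−1). -/

import Mathlib

open Finset
open scoped Classical

/-- Edges of `E` lying inside the vertex set `c`. -/
noncomputable def inEdges {V : Type*} [DecidableEq V]
    (E : Finset (Sym2 V)) (c : Finset V) : Finset (Sym2 V) :=
  E.filter (fun e => ∀ v ∈ e, v ∈ c)

/-- The CPM(γ) score of a clustering `P` of the graph with edge set `E`. -/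
noncomputable def cpm {V : Type*} [Fintype V] [DecidableEq V] (γ : ℝ)
    (E : Finset (Sym2 V)) (P : Finpartition (univ : Finset V)) : ℝ :=
  ∑ c ∈ P.parts, (((inEdges E c).card : ℝ) - γ * (c.card.choose 2))


/-- The edges of `E` crossing between `A` and `B`. -/
noncomputable def cutEdges {V : Type*} [DecidableEq V]
    (E : Finset (Sym2 V)) (A B : Finset V) : Finset (Sym2 V) :=
  E.filter (fun e => ∃ u ∈ A, ∃ v ∈ B, e = s(u, v))

/-- if `C` is a cluster of size `n` in a CPM(γ)-optimal clustering and `E₀` is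
any edge cut of `C` splitting it into nonempty parts `A` and `B`, then `|E₀| ≥ γ(n-1)`.
In particular CPM(γ) satisfies Connectivity. -/
theorem stmt_4 {V : Type*} [Fintype V] [DecidableEq V]
    (γ : ℝ) (hγ : 0 < γ)
    (E : Finset (Sym2 V))
    (Γ : Finpartition (univ : Finset V))
    (hopt : ∀ P : Finpartition (univ : Finset V), cpm γ E P ≤ cpm γ E Γ)
    (C : Finset V) (hC : C ∈ Γ.parts)
    (A B : Finset V) (hA : A.Nonempty) (hB : B.Nonempty)
    (hdisj : Disjoint A B) (hunion : A ∪ B = C) :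
    γ * ((C.card : ℝ) - 1) ≤ ((cutEdges E A B).card : ℝ) := by
  classical
  have hAC : A ⊆ C := hunion ▸ Finset.subset_union_left
  have hBC : B ⊆ C := hunion ▸ Finset.subset_union_right
  have hAB : A ≠ B := by
    rintro rfl
    exact hA.ne_empty (disjoint_self.1 hdisj)
  -- A and B are not parts of Γ
  have hAne : A ∉ Γ.parts.erase C := by
    intro h
    obtain ⟨hne, hmem⟩ := Finset.mem_erase.1 h
    have := Γ.disjoint hmem hC hne
    exact hA.ne_empty (Finset.subset_empty.1 (this le_rfl hAC))
  have hBne : B ∉ Γ.parts.erase C := by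
    intro h
    obtain ⟨hne, hmem⟩ := Finset.mem_erase.1 h
    have := Γ.disjoint hmem hC hne
    exact hB.ne_empty (Finset.subset_empty.1 (this le_rfl hBC))
  -- the refined partition
  set parts' : Finset (Finset V) := insert A (insert B (Γ.parts.erase C)) with hparts'
  have hdisjC : ∀ D ∈ Γ.parts.erase C, Disjoint C D := by
    intro D hD
    obtain ⟨hne, hmem⟩ := Finset.mem_erase.1 hD
    exact Γ.disjoint hC hmem (Ne.symm hne)
  have hApart : ∀ D ∈ Γ.parts.erase C, Disjoint A D := fun D hD =>
    Finset.disjoint_of_subset_left hAC (hdisjC D hD)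
  have hBpart : ∀ D ∈ Γ.parts.erase C, Disjoint B D := fun D hD =>
    Finset.disjoint_of_subset_left hBC (hdisjC D hD)
  have hpd : (parts' : Set (Finset V)).PairwiseDisjoint id := by
    intro x hx y hy hxy
    simp only [hparts', Finset.coe_insert, Set.mem_insert_iff, Finset.mem_coe] at hx hy
    show Disjoint x y
    obtain rfl | rfl | hx := hx
    · obtain rfl | rfl | hy := hy
      · exact absurd rfl hxy
      · exact hdisj
      · exact hApart _ hy
    · obtain rfl | rfl | hy := hy
      · exact hdisj.symm
      · exact absurd rfl hxy
      · exact hBpart _ hy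
    · obtain rfl | rfl | hy := hy
      · exact (hApart _ hx).symm
      · exact (hBpart _ hx).symm
      · exact Γ.disjoint (Finset.mem_of_mem_erase hx) (Finset.mem_of_mem_erase hy) hxy
  have hsup : parts'.sup id = (univ : Finset V) := by
    have h1 : Γ.parts.sup id = univ := Γ.sup_parts
    have h2 : Γ.parts = insert C (Γ.parts.erase C) := (Finset.insert_erase hC).symm
    rw [h2, Finset.sup_insert] at h1
    rw [hparts', Finset.sup_insert, Finset.sup_insert, ← sup_assoc]
    have : A ⊔ B = C := by
      simpa [Finset.sup_eq_union] using hunion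
    rw [show (id A : Finset V) = A from rfl] at *
    simpa [this] using h1
  let Γ' : Finpartition (univ : Finset V) :=
    { parts := parts'
      supIndep := Finset.supIndep_iff_pairwiseDisjoint.2 hpd
      sup_parts := hsup
      bot_notMem := by
        simp only [hparts', Finset.mem_insert, Finset.mem_erase]
        push_neg
        refine ⟨Ne.symm hA.ne_empty, Ne.symm hB.ne_empty, fun _ => Γ.bot_notMem⟩ }
  have hopt' := hopt Γ'
  -- compute the two cpm values
  have hΓ : cpm γ E Γ = (((inEdges E C).card : ℝ) - γ * (C.card.choose 2))
      + ∑ c ∈ Γ.parts.erase C, (((inEdges E c).card : ℝ) - γ * (c.card.choose 2)) := by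
    unfold cpm
    conv_lhs => rw [← Finset.insert_erase hC]
    rw [Finset.sum_insert (Finset.notMem_erase C Γ.parts)]
  have hΓ' : cpm γ E Γ' = (((inEdges E A).card : ℝ) - γ * (A.card.choose 2))
      + ((((inEdges E B).card : ℝ) - γ * (B.card.choose 2))
      + ∑ c ∈ Γ.parts.erase C, (((inEdges E c).card : ℝ) - γ * (c.card.choose 2))) := by
    unfold cpm
    show ∑ c ∈ parts', _ = _
    rw [hparts', Finset.sum_insert (by simp [hAne, hAB]), Finset.sum_insert hBne]
  rw [hΓ, hΓ'] at hopt'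
  -- counting edges
  have hsub : inEdges E C ⊆ inEdges E A ∪ inEdges E B ∪ cutEdges E A B := by
    intro e he
    simp only [inEdges, Finset.mem_filter] at he
    obtain ⟨heE, hein⟩ := he
    induction e using Sym2.ind with
    | _ u v =>
      have hu : u ∈ C := hein u (by simp)
      have hv : v ∈ C := hein v (by simp)
      rw [← hunion] at hu hv
      simp only [Finset.mem_union] at hu hv
      simp only [Finset.mem_union, inEdges, cutEdges, Finset.mem_filter]
      rcases hu with hu | hu <;> rcases hv with hv | hv
      · exact Or.inl (Or.inl ⟨heE, by intro w hw; rcases Sym2.mem_iff.1 hw with rfl | rfl <;> assumption⟩)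
      · exact Or.inr ⟨heE, u, hu, v, hv, rfl⟩
      · exact Or.inr ⟨heE, v, hv, u, hu, Sym2.eq_swap⟩
      · exact Or.inl (Or.inr ⟨heE, by intro w hw; rcases Sym2.mem_iff.1 hw with rfl | rfl <;> assumption⟩)
  have hcard : ((inEdges E C).card : ℝ) ≤ (inEdges E A).card + (inEdges E B).card
      + (cutEdges E A B).card := by
    have h0 := Finset.card_le_card hsub
    have h1 := Finset.card_union_le (inEdges E A ∪ inEdges E B) (cutEdges E A B)
    have h2 := Finset.card_union_le (inEdges E A) (inEdges E B)
    have : (inEdges E C).card ≤ (inEdges E A).card + (inEdges E B).card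
        + (cutEdges E A B).card := by omega
    exact_mod_cast this
  -- cardinalities
  have hcardC : C.card = A.card + B.card := by
    rw [← hunion, Finset.card_union_of_disjoint hdisj]
  have ha1 : 1 ≤ (A.card : ℝ) := by exact_mod_cast Finset.card_pos.2 hA
  have hb1 : 1 ≤ (B.card : ℝ) := by exact_mod_cast Finset.card_pos.2 hB
  have hchoose : ∀ n : ℕ, ((n.choose 2 : ℕ) : ℝ) = n * (n - 1) / 2 := fun n =>
    Nat.cast_choose_two ℝ n
  have hkey : γ * ((C.card : ℝ) * (C.card - 1) / 2 - A.card * (A.card - 1) / 2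
      - B.card * (B.card - 1) / 2) ≤ (cutEdges E A B).card := by
    have := hopt'
    rw [hchoose, hchoose, hchoose] at this
    nlinarith [hcard]
  have habc : (C.card : ℝ) = A.card + B.card := by exact_mod_cast hcardC
  have hprod : (C.card : ℝ) - 1 ≤ (A.card : ℝ) * B.card := by
    nlinarith
  calc γ * ((C.card : ℝ) - 1) ≤ γ * ((A.card : ℝ) * B.card) := by
        exact mul_le_mul_of_nonneg_left hprod hγ.le
    _ = γ * ((C.card : ℝ) * (C.card - 1) / 2 - A.card * (A.card - 1) / 2
        - B.card * (B.card - 1) / 2) := by rw [habc]; ring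
    _ ≤ _ := hkey
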